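/- The m! × (m+1)! pattern-containment matrix B_m, with (τ, τ') entry X^τ(τ') for τ ∈ S_m and τ' ∈ S_{m+1}, has rank m!. -/

import Mathlib

/-- `patCount τ σ` = number of occurrences of the pattern `τ` in `σ`, i.e. the number of
strictly increasing `f : Fin m → Fin n` (whose image plays the role of the set `A`) such
that `σ` restricted to the image of `f` is order-isomorphic to `τ`. -/
def patCount {m n : ℕ} (τ : Equiv.Perm (Fin m)) (σ : Equiv.Perm (Fin n)) : ℕ :=
  ((Finset.univ : Finset (Fin m → Fin n)).filter
    (fun f => (∀ i j, i < j → f i < f j) ∧ ∀ i j, τ i < τ j ↔ σ (f i) < σ (f j))).card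

namespace PatRank

open Equiv Finset

variable {m : ℕ}

/-- The extension `σ°` of a permutation: `σ°(0) = 0`, `σ°(i+1) = σ(i)+1`. -/
def pext (σ : Perm (Fin m)) : Perm (Fin (m + 1)) :=
  (finSuccEquiv m).symm.permCongr σ.optionCongr

@[simp] lemma pext_zero (σ : Perm (Fin m)) : pext σ 0 = 0 := by
  simp [pext, Equiv.permCongr_apply]

@[simp] lemma pext_succ (σ : Perm (Fin m)) (i : Fin m) : pext σ i.succ = (σ i).succ := by
  simp [pext, Equiv.permCongr_apply]

/-- A permutation's value is determined as the rank in any order-isomorphic sequence. -/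
lemma perm_eq_card {α : Type*} [LinearOrder α] (τ : Perm (Fin m)) (g : Fin m → α)
    (hg : ∀ i j, τ i < τ j ↔ g i < g j) (i : Fin m) :
    (τ i : ℕ) = (Finset.univ.filter fun j => g j < g i).card := by
  have h1 : (Finset.univ.filter fun j => g j < g i)
      = (Finset.univ.filter fun j => τ j < τ i) := by
    ext j
    simp only [mem_filter, mem_univ, true_and]
    exact (hg j i).symm
  have h2 : (Finset.univ.filter fun j => τ j < τ i) = (Finset.Iio (τ i)).image τ.symm := by
    ext j
    simp only [mem_filter, mem_univ, true_and, mem_image, mem_Iio]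
    constructor
    · exact fun h => ⟨τ j, h, τ.symm_apply_apply j⟩
    · rintro ⟨k, hk, rfl⟩; simpa using hk
  rw [h1, h2, Finset.card_image_of_injective _ τ.symm.injective, Fin.card_Iio]

lemma eq_succAbove_of_strictMono {f : Fin m → Fin (m + 1)} (hf : StrictMono f) :
    ∃ p : Fin (m + 1), f = Fin.succAbove p := by
  have hns : ¬Function.Surjective f := by
    intro hs
    have := Fintype.card_le_of_surjective f hs
    simp at this
  rw [Function.Surjective] at hns
  push_neg at hns
  obtain ⟨p, hp⟩ := hns
  refine ⟨p, ?_⟩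
  have hsurj : ∀ x : Fin (m + 1), x ≠ p → ∃ i, f i = x := by
    set f' : Fin m → {x : Fin (m + 1) // x ≠ p} := fun i => ⟨f i, fun h => hp i h⟩ with hf'
    have hinj' : Function.Injective f' := fun a b h =>
      hf.injective (congrArg Subtype.val h)
    have hcard : Fintype.card {x : Fin (m + 1) // x ≠ p} = m := by
      simp [Fintype.card_subtype_compl]
    have hbij := (Fintype.bijective_iff_injective_and_card f').2 ⟨hinj', by simp [hcard]⟩
    intro x hx
    obtain ⟨i, hi⟩ := hbij.2 ⟨x, hx⟩
    exact ⟨i, congrArg Subtype.val hi⟩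
  have hr : Set.range f = Set.range (Fin.succAbove p) := by
    rw [Fin.range_succAbove]
    ext x
    constructor
    · rintro ⟨i, rfl⟩
      exact fun h => hp i (by simpa using h)
    · intro hx
      exact hsurj x hx
  exact (@StrictMono.range_inj (Fin m) (Fin (m + 1)) _ _ IsWellOrder.toIsWellFounded _ _
    hf (Fin.strictMono_succAbove p)).1 hr

lemma lex_le_aux {τ σ : Perm (Fin m)} {p : Fin (m + 1)}
    (hpat : ∀ i j, τ i < τ j ↔ pext σ (p.succAbove i) < pext σ (p.succAbove j)) :
    toLex (⇑τ) < toLex (⇑σ) ∨ τ = σ := by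
  classical
  set g : Fin m → Fin (m + 1) := fun i => pext σ (p.succAbove i) with hgdef
  have hginj : Function.Injective g :=
    (pext σ).injective.comp (Fin.succAbove_right_injective)
  have htau : ∀ i, (τ i : ℕ) = (Finset.univ.filter fun j => g j < g i).card :=
    perm_eq_card τ g hpat
  have hsig : ∀ i, (σ i : ℕ) = (Finset.univ.filter fun j => σ j < σ i).card :=
    perm_eq_card σ σ (fun _ _ => Iff.rfl)
  by_cases hp0 : p = 0
  · subst hp0
    have hgs : ∀ i, g i = (σ i).succ := by
      intro i; simp [hgdef, Fin.succAbove_zero]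
    have hts : ∀ i, (τ i : ℕ) = (σ i : ℕ) := by
      intro i
      rw [htau, hsig]
      congr 1
      ext j
      simp [hgs, Fin.succ_lt_succ_iff]
    exact Or.inr (Equiv.coe_fn_injective (funext fun i => Fin.ext (hts i)))
  · by_cases heq : (⇑τ : Fin m → Fin m) = ⇑σ
    · exact Or.inr (Equiv.coe_fn_injective heq)
    have hne : ∃ i, τ i ≠ σ i := by
      by_contra hc; push_neg at hc; exact heq (funext hc)
    obtain ⟨i0, hi0⟩ := hne
    set D := Finset.univ.filter (fun i => τ i ≠ σ i) with hD
    have hDne : D.Nonempty := ⟨i0, by simp [hD, hi0]⟩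
    set d := D.min' hDne with hdd
    have hd : τ d ≠ σ d := by
      have := D.min'_mem hDne
      simp only [hD, mem_filter, mem_univ, true_and] at this
      exact this
    have hmin : ∀ j, j < d → τ j = σ j := by
      intro j hj
      by_contra hc
      exact absurd (D.min'_le j (by simp [hD, hc])) (not_le.mpr hj)
    have hp0' : 0 < (p : ℕ) := by
      rcases Nat.eq_zero_or_pos (p : ℕ) with h | h
      · exact absurd (Fin.ext h) hp0
      · exact h
    -- g agrees with the identity below p, given σ agrees with id below
    have G0 : ∀ j : Fin m, (j : ℕ) < (p : ℕ) →
        (∀ k : Fin m, (k : ℕ) < (j : ℕ) → (σ k : ℕ) = k) → (g j : ℕ) = j := by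
      intro j hj hk
      have hcs : Fin.castSucc j < p := by
        rw [Fin.lt_def]; simpa using hj
      have h1 : g j = pext σ (Fin.castSucc j) := by
        rw [hgdef]; simp only; rw [Fin.succAbove_of_castSucc_lt _ _ hcs]
      rcases Nat.eq_zero_or_pos (j : ℕ) with h0 | hpos
      · have hz : Fin.castSucc j = 0 := Fin.ext (by simpa using h0)
        rw [h1, hz, pext_zero]
        simpa using h0.symm
      · have hjm := j.isLt
        set k : Fin m := ⟨(j : ℕ) - 1, by omega⟩ with hkdef
        have hksucc : Fin.castSucc j = Fin.succ k := Fin.ext (by simp [hkdef]; omega)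
        have hσk : (σ k : ℕ) = (j : ℕ) - 1 := hk k (by simp [hkdef]; omega)
        rw [h1, hksucc, pext_succ, Fin.val_succ, hσk]
        omega
    have S1 : ∀ i : Fin m, (i : ℕ) < (p : ℕ) →
        (∀ k : Fin m, (k : ℕ) < (i : ℕ) → (σ k : ℕ) = k) → (τ i : ℕ) = i := by
      intro i hip hk
      have hg_small : ∀ k : Fin m, (k : ℕ) ≤ (i : ℕ) → (g k : ℕ) = k := by
        intro k hki
        exact G0 k (lt_of_le_of_lt hki hip) (fun l hl => hk l (lt_of_lt_of_le hl hki))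
      have hgi : (g i : ℕ) = i := hg_small i le_rfl
      rw [htau]
      have hset : (Finset.univ.filter fun j => g j < g i) = Finset.Iio i := by
        ext j
        simp only [mem_filter, mem_univ, true_and, mem_Iio]
        constructor
        · intro hlt
          have hvj : (g j : ℕ) < (i : ℕ) := by
            rw [← hgi]; exact hlt
          rw [Fin.lt_def]
          by_contra hge
          push_neg at hge
          have him := i.isLt
          have htm : (g j : ℕ) < m := by omega
          have hgt : g ⟨(g j : ℕ), htm⟩ = g j :=
            Fin.ext (by rw [hg_small ⟨(g j : ℕ), htm⟩ (by simp; omega)])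
          have hjt := hginj hgt
          have : ((⟨(g j : ℕ), htm⟩ : Fin m) : ℕ) = (j : ℕ) := congrArg Fin.val hjt
          simp at this
          omega
        · intro hji
          have h1 : (g j : ℕ) = j := hg_small j (le_of_lt hji)
          rw [Fin.lt_def, h1, hgi]
          exact hji
      rw [hset, Fin.card_Iio]
    -- below d (and below p), σ is the identity
    have Q : ∀ t : ℕ, ∀ j : Fin m, (j : ℕ) = t → (j : ℕ) < (d : ℕ) → (j : ℕ) < (p : ℕ) →
        (σ j : ℕ) = j := by
      intro t
      induction t using Nat.strong_induction_on with
      | _ t IH =>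
        intro j hjt hjd hjp
        have hτ : (τ j : ℕ) = j :=
          S1 j hjp (fun k hk => IH (k : ℕ) (by omega) k rfl (by omega) (by omega))
        rw [← hmin j (by rw [Fin.lt_def]; exact hjd)]
        exact hτ
    by_cases hdp : (d : ℕ) < (p : ℕ)
    · have hσk : ∀ k : Fin m, (k : ℕ) < (d : ℕ) → (σ k : ℕ) = k :=
        fun k hk => Q k k rfl hk (by omega)
      have hτd : (τ d : ℕ) = d := S1 d hdp hσk
      have hσd : (d : ℕ) < (σ d : ℕ) := by
        rcases lt_trichotomy ((σ d : ℕ)) ((d : ℕ)) with h | h | h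
        · exfalso
          have htm : (σ d : ℕ) < m := (σ d).isLt
          have h1 : σ ⟨(σ d : ℕ), htm⟩ = σ d := Fin.ext (hσk ⟨(σ d : ℕ), htm⟩ h)
          have h2 := σ.injective h1
          have h3 : ((⟨(σ d : ℕ), htm⟩ : Fin m) : ℕ) = (d : ℕ) := congrArg Fin.val h2
          simp at h3
          omega
        · exact absurd (Fin.ext (hτd.trans h.symm) : τ d = σ d) hd
        · exact h
      refine Or.inl ⟨d, fun j hj => hmin j hj, ?_⟩
      show τ d < σ d
      rw [Fin.lt_def, hτd]
      exact hσd
    · exfalso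
      push_neg at hdp
      have hσk : ∀ k : Fin m, (k : ℕ) < (p : ℕ) → (σ k : ℕ) = k :=
        fun k hk => Q k k rfl (by omega) hk
      have hgk : ∀ k : Fin m, (k : ℕ) < (p : ℕ) → (g k : ℕ) = k :=
        fun k hk => G0 k hk (fun l hl => hσk l (by omega))
      have hσd_ge : (p : ℕ) ≤ (σ d : ℕ) := by
        by_contra hlt
        push_neg at hlt
        have htm : (σ d : ℕ) < m := (σ d).isLt
        have h1 : σ ⟨(σ d : ℕ), htm⟩ = σ d := Fin.ext (hσk ⟨(σ d : ℕ), htm⟩ hlt)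
        have h2 := σ.injective h1
        have h3 : ((⟨(σ d : ℕ), htm⟩ : Fin m) : ℕ) = (d : ℕ) := congrArg Fin.val h2
        simp at h3
        omega
      have hgd : (g d : ℕ) = (σ d : ℕ) + 1 := by
        have hle : p ≤ Fin.castSucc d := by
          rw [Fin.le_def]; simpa using hdp
        rw [hgdef]; simp only; rw [Fin.succAbove_of_le_castSucc _ _ hle, pext_succ, Fin.val_succ]
      have key : (τ d : ℕ) = (σ d : ℕ) := by
        rw [htau, hsig]
        congr 1
        ext j
        simp only [mem_filter, mem_univ, true_and]
        by_cases hj : (j : ℕ) < (p : ℕ)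
        · have hσj := hσk j hj
          constructor
          · intro _
            rw [Fin.lt_def, hσj]
            omega
          · intro _
            rw [Fin.lt_def, hgk j hj, hgd]
            omega
        · push_neg at hj
          have hgj : (g j : ℕ) = (σ j : ℕ) + 1 := by
            have hle : p ≤ Fin.castSucc j := by
              rw [Fin.le_def]; simpa using hj
            rw [hgdef]; simp only
            rw [Fin.succAbove_of_le_castSucc _ _ hle, pext_succ, Fin.val_succ]
          rw [Fin.lt_def, Fin.lt_def, hgj, hgd]
          omega
      exact hd (Fin.ext key)

lemma lex_lt_or_eq_of_patCount {τ σ : Perm (Fin m)} (h : patCount τ (pext σ) ≠ 0) :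
    toLex (⇑τ) < toLex (⇑σ) ∨ τ = σ := by
  obtain ⟨f, hf⟩ := Finset.card_ne_zero.mp h
  simp only [mem_filter, mem_univ, true_and] at hf
  obtain ⟨hmono, hpat⟩ := hf
  obtain ⟨p, rfl⟩ := eq_succAbove_of_strictMono (fun i j hij => hmono i j hij)
  exact lex_le_aux hpat

lemma patCount_pext_self (σ : Perm (Fin m)) : patCount σ (pext σ) ≠ 0 := by
  rw [patCount]
  apply Finset.card_ne_zero.mpr
  refine ⟨Fin.succ, ?_⟩
  simp only [mem_filter, mem_univ, true_and]
  constructor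
  · intro i j hij
    exact Fin.succ_lt_succ_iff.mpr hij
  · intro i j
    simp [Fin.succ_lt_succ_iff]

end PatRank

theorem pattern_matrix_rank (m : ℕ) :
    Matrix.rank (Matrix.of fun (τ : Equiv.Perm (Fin m)) (τ' : Equiv.Perm (Fin (m + 1))) =>
      (patCount τ τ' : ℚ)) = Nat.factorial m := by
  classical
  set M : Matrix (Equiv.Perm (Fin m)) (Equiv.Perm (Fin (m + 1))) ℚ :=
    Matrix.of fun τ τ' => (patCount τ τ' : ℚ) with hM
  set P : Matrix (Equiv.Perm (Fin (m + 1))) (Equiv.Perm (Fin m)) ℚ :=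
    Matrix.of fun τ' σ => if τ' = PatRank.pext σ then 1 else 0 with hP
  have hMP : ∀ τ σ, (M * P) τ σ = (patCount τ (PatRank.pext σ) : ℚ) := by
    intro τ σ
    simp [Matrix.mul_apply, hM, hP, mul_ite]
  letI : LinearOrder (Lex (Fin m → Fin m)) :=
    @Pi.Lex.linearOrder (Fin m) (fun _ => Fin m) _
      IsWellOrder.toIsWellFounded (fun _ => inferInstance)
  letI : LinearOrder (Equiv.Perm (Fin m)) :=
    LinearOrder.lift' (fun τ => toLex (⇑τ : Fin m → Fin m))
      (fun a b h => Equiv.coe_fn_injective (congrArg ofLex h))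
  have htri : (M * P).BlockTriangular id := by
    intro τ σ hlt
    rw [hMP]
    by_contra hne
    have h0 : patCount τ (PatRank.pext σ) ≠ 0 := by
      intro h; rw [h] at hne; simp at hne
    have hlt' : toLex (⇑σ : Fin m → Fin m) < toLex (⇑τ : Fin m → Fin m) := hlt
    rcases PatRank.lex_lt_or_eq_of_patCount h0 with h | h
    · exact lt_asymm hlt' h
    · subst h
      exact lt_irrefl _ hlt'
  have hdet : (M * P).det ≠ 0 := by
    rw [Matrix.det_of_upperTriangular htri]
    apply Finset.prod_ne_zero_iff.mpr
    intro σ _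
    rw [hMP]
    exact_mod_cast PatRank.patCount_pext_self σ
  have hrank : (M * P).rank = Nat.factorial m := by
    rw [Matrix.rank_of_isUnit _ ((Matrix.isUnit_iff_isUnit_det _).mpr (isUnit_iff_ne_zero.mpr hdet))]
    simp [Fintype.card_perm]
  apply le_antisymm
  · calc M.rank ≤ Fintype.card (Equiv.Perm (Fin m)) := Matrix.rank_le_card_height M
      _ = Nat.factorial m := by simp [Fintype.card_perm]
  · calc Nat.factorial m = (M * P).rank := hrank.symm
      _ ≤ M.rank := Matrix.rank_mul_le_left M P
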